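/- Let n ≥ 1 and let L, U : Matrix (Fin n) (Fin n) ℝ be symmetric matrices with L i j ≤ U i j for all i, j. For a sign vector z : Fin n → ℝ with z i ∈ {-1, 1} for all i, define the vertex matrix U^z by (U^z) i j = U i j if i = j or z i * z j = 1, and (U^z) i j = L i j otherwise. Then for every symmetric matrix H : Matrix (Fin n) (Fin n) ℝ with L i j ≤ H i j ≤ U i j for all i, j, every eigenvalue λ of H satisfies λ ≤ max over all sign vectors z of λ_max(U^z), where λ_max denotes the largest eigenvalue of a real symmetric matrix. -/

import Mathlib

/-- The set of (real) eigenvalues of a real matrix. -/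
def realSpec {n : ℕ} (A : Matrix (Fin n) (Fin n) ℝ) : Set ℝ :=
  {μ | ∃ v : Fin n → ℝ, v ≠ 0 ∧ A.mulVec v = μ • v}

/-- The largest eigenvalue of a (symmetric) real matrix. -/
noncomputable def lamMax {n : ℕ} (A : Matrix (Fin n) (Fin n) ℝ) : ℝ := sSup (realSpec A)

/-- The Hertz–Rohn vertex matrix `U^z` for a sign vector `z`. -/
noncomputable def vertexU {n : ℕ} (L U : Matrix (Fin n) (Fin n) ℝ) (z : Fin n → ℝ) :
    Matrix (Fin n) (Fin n) ℝ :=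
  Matrix.of fun i j => if i = j ∨ z i * z j = 1 then U i j else L i j

open Matrix RealInnerProductSpace

lemma symmDot {n : ℕ} (A : Matrix (Fin n) (Fin n) ℝ) (hA : A.IsSymm) (x y : Fin n → ℝ) :
    (A *ᵥ x) ⬝ᵥ y = x ⬝ᵥ (A *ᵥ y) := by
  rw [dotProduct_mulVec, ← mulVec_transpose, hA.eq]

lemma innerDot {n : ℕ} (x y : EuclideanSpace ℝ (Fin n)) : ⟪x, y⟫ = ⇑x ⬝ᵥ ⇑y := by
  simp [PiLp.inner_apply, dotProduct]
  exact Finset.sum_congr rfl fun _ _ => mul_comm _ _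

section
variable {n : ℕ} {A : Matrix (Fin n) (Fin n) ℝ}

lemma hA_symm (hA : A.IsHermitian) : A.IsSymm := by
  rwa [Matrix.IsHermitian, conjTranspose_eq_transpose_of_trivial] at hA

lemma isHermitian_of_isSymm (hA : A.IsSymm) : A.IsHermitian := by
  rwa [Matrix.IsHermitian, conjTranspose_eq_transpose_of_trivial]

lemma repr_dot (hA : A.IsHermitian) (x : EuclideanSpace ℝ (Fin n)) (j : Fin n) :
    hA.eigenvectorBasis.repr x j = ⇑(hA.eigenvectorBasis j) ⬝ᵥ ⇑x := by
  rw [hA.eigenvectorBasis.repr_apply_apply, innerDot]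

lemma repr_mulVec (hA : A.IsHermitian) (x : EuclideanSpace ℝ (Fin n)) (j : Fin n) :
    hA.eigenvectorBasis.repr (WithLp.toLp 2 (A *ᵥ ⇑x : Fin n → ℝ)) j
      = hA.eigenvalues j * hA.eigenvectorBasis.repr x j := by
  rw [repr_dot, repr_dot]
  show ⇑(hA.eigenvectorBasis j) ⬝ᵥ (A *ᵥ ⇑x) = _
  rw [← symmDot A (hA_symm hA), hA.mulVec_eigenvectorBasis, smul_dotProduct, smul_eq_mul]

lemma parseval (hA : A.IsHermitian) (x y : EuclideanSpace ℝ (Fin n)) :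
    ⇑x ⬝ᵥ ⇑y = ∑ j, hA.eigenvectorBasis.repr x j * hA.eigenvectorBasis.repr y j := by
  rw [← innerDot, ← hA.eigenvectorBasis.repr.inner_map_map x y]
  simp only [PiLp.inner_apply, starRingEnd_apply, star_trivial]
  simp only [Real.inner_apply]

lemma eig_mem (hA : A.IsHermitian) : ∀ j, hA.eigenvalues j ∈ realSpec A := fun j =>
  ⟨⇑(hA.eigenvectorBasis j),
    by simpa using hA.eigenvectorBasis.orthonormal.ne_zero j,
    hA.mulVec_eigenvectorBasis j⟩

lemma spec_sub (hA : A.IsHermitian) : realSpec A ⊆ Set.range hA.eigenvalues := by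
  rintro μ ⟨v, hv0, hv⟩
  set B := hA.eigenvectorBasis
  have hrepr : B.repr (WithLp.toLp 2 v) ≠ 0 := by
    simpa using (map_ne_zero_iff _ B.repr.injective (x := WithLp.toLp 2 v)).2 (by simpa using hv0)
  obtain ⟨j, hj⟩ : ∃ j, B.repr (WithLp.toLp 2 v) j ≠ 0 := by
    by_contra h; push_neg at h; exact hrepr (PiLp.ext h)
  refine ⟨j, ?_⟩
  have h1 := repr_mulVec hA (WithLp.toLp 2 v) j
  rw [show (WithLp.toLp 2 v).ofLp = v from rfl, hv] at h1
  have h2 : B.repr (WithLp.toLp 2 (μ • v : Fin n → ℝ)) j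
      = μ * B.repr (WithLp.toLp 2 v) j := by
    rw [show WithLp.toLp 2 (μ • v : Fin n → ℝ) = μ • WithLp.toLp 2 v from rfl,
      _root_.map_smul]
    rfl
  rw [h2] at h1
  rw [mul_eq_mul_right_iff] at h1
  rcases h1 with h | h
  · exact h.symm
  · exact absurd h hj

lemma bddAbove_realSpec (hA : A.IsHermitian) : BddAbove (realSpec A) :=
  ((Set.finite_range hA.eigenvalues).subset (spec_sub hA)).bddAbove

lemma rayleigh_le (hA : A.IsHermitian) (v : Fin n → ℝ) :
    v ⬝ᵥ (A *ᵥ v) ≤ lamMax A * (v ⬝ᵥ v) := by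
  set B := hA.eigenvectorBasis with hB
  set vE : EuclideanSpace ℝ (Fin n) := WithLp.toLp 2 v with hvE
  have hM : ∀ j, hA.eigenvalues j ≤ lamMax A := fun j =>
    le_csSup (bddAbove_realSpec hA) (eig_mem hA j)
  have P1 : v ⬝ᵥ (A *ᵥ v) = ∑ j, hA.eigenvalues j * (B.repr vE j * B.repr vE j) := by
    have h := parseval hA vE (WithLp.toLp 2 (A *ᵥ v : Fin n → ℝ))
    have h2 : ∀ j, B.repr (WithLp.toLp 2 (A *ᵥ v : Fin n → ℝ)) j
        = hA.eigenvalues j * B.repr vE j := fun j => repr_mulVec hA vE j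
    calc v ⬝ᵥ (A *ᵥ v)
        = ∑ j, B.repr vE j * B.repr (WithLp.toLp 2 (A *ᵥ v : Fin n → ℝ)) j := h
      _ = ∑ j, hA.eigenvalues j * (B.repr vE j * B.repr vE j) := by
          refine Finset.sum_congr rfl fun j _ => ?_; rw [h2 j]; ring
  have P2 : v ⬝ᵥ v = ∑ j, B.repr vE j * B.repr vE j := parseval hA vE vE
  rw [P1, P2, Finset.mul_sum]
  exact Finset.sum_le_sum fun j _ =>
    mul_le_mul_of_nonneg_right (hM j) (mul_self_nonneg _)

end

/-- Hertz and Rohn's method: validity of the upper eigenvalue bound. -/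
theorem hertz_rohn_upper_valid
    (n : ℕ) (hn : 0 < n)
    (L U : Matrix (Fin n) (Fin n) ℝ)
    (hLsymm : L.IsSymm) (hUsymm : U.IsSymm)
    (hLU : ∀ i j, L i j ≤ U i j)
    (H : Matrix (Fin n) (Fin n) ℝ) (hHsymm : H.IsSymm)
    (hHL : ∀ i j, L i j ≤ H i j) (hHU : ∀ i j, H i j ≤ U i j)
    (lam : ℝ) (hlam : lam ∈ realSpec H) :
    lam ≤ sSup {m : ℝ | ∃ z : Fin n → ℝ, (∀ i, z i = -1 ∨ z i = 1) ∧
      m = lamMax (vertexU L U z)} := by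
  obtain ⟨v, hv0, hv⟩ := hlam
  set z : Fin n → ℝ := fun i => if 0 ≤ v i then 1 else -1 with hzdef
  have hzpm : ∀ i, z i = -1 ∨ z i = 1 := fun i => by
    by_cases h : 0 ≤ v i
    · exact Or.inr (if_pos h)
    · exact Or.inl (if_neg h)
  -- characterize z i * z j = 1
  have hzz : ∀ i j, z i * z j = 1 ↔ (0 ≤ v i ↔ 0 ≤ v j) := by
    intro i j
    by_cases hi : 0 ≤ v i <;> by_cases hj : 0 ≤ v j <;>
      simp [hzdef, hi, hj] <;> norm_num
  set M : Matrix (Fin n) (Fin n) ℝ := vertexU L U z with hMdef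
  have hMsymm : M.IsSymm := by
    rw [Matrix.IsSymm]
    ext i j
    simp only [hMdef, vertexU, Matrix.transpose_apply, Matrix.of_apply]
    by_cases h : j = i ∨ z j * z i = 1
    · rw [if_pos h, if_pos ?_]
      · exact hUsymm.apply i j
      · rcases h with h | h
        · exact Or.inl h.symm
        · exact Or.inr (by rwa [mul_comm])
    · rw [if_neg h, if_neg ?_]
      · exact hLsymm.apply i j
      · intro h'
        rcases h' with h' | h'
        · exact h (Or.inl h'.symm)
        · exact h (Or.inr (by rwa [mul_comm]))
  have hMherm : M.IsHermitian := isHermitian_of_isSymm hMsymm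
  -- termwise comparison
  have key : ∀ i j, v i * (H i j * v j) ≤ v i * (M i j * v j) := by
    intro i j
    have hre : ∀ X : Matrix (Fin n) (Fin n) ℝ, v i * (X i j * v j) = X i j * (v i * v j) := by
      intro X; ring
    rw [hre H, hre M]
    by_cases hc : i = j ∨ z i * z j = 1
    · have hMU : M i j = U i j := if_pos hc
      have hnn : 0 ≤ v i * v j := by
        rcases hc with rfl | h
        · exact mul_self_nonneg _
        · rw [hzz] at h
          by_cases hi : 0 ≤ v i
          · exact mul_nonneg hi (h.mp hi)
          · have hj : ¬ 0 ≤ v j := fun hj => hi (h.mpr hj)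
            nlinarith [le_of_not_ge hi, le_of_not_ge hj]
      rw [hMU]
      exact mul_le_mul_of_nonneg_right (hHU i j) hnn
    · have hML : M i j = L i j := if_neg hc
      push_neg at hc
      have hnp : v i * v j ≤ 0 := by
        have h : ¬(0 ≤ v i ↔ 0 ≤ v j) := fun hh => hc.2 ((hzz i j).mpr hh)
        by_cases hi : 0 ≤ v i
        · have hj : ¬ 0 ≤ v j := fun hj => h ⟨fun _ => hj, fun _ => hi⟩
          exact mul_nonpos_of_nonneg_of_nonpos hi (le_of_not_ge hj)
        · have hj : 0 ≤ v j := by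
            by_contra hj
            exact h ⟨fun h' => absurd h' hi, fun h' => absurd h' hj⟩
          exact mul_nonpos_of_nonpos_of_nonneg (le_of_not_ge hi) hj
      rw [hML]
      exact mul_le_mul_of_nonpos_right (hHL i j) hnp
  have hHM : v ⬝ᵥ (H *ᵥ v) ≤ v ⬝ᵥ (M *ᵥ v) := by
    simp only [dotProduct, Matrix.mulVec, Finset.mul_sum]
    exact Finset.sum_le_sum fun i _ => Finset.sum_le_sum fun j _ => key i j
  have hS : 0 < v ⬝ᵥ v := by
    rcases lt_or_eq_of_le (Finset.sum_nonneg fun i _ => mul_self_nonneg (v i) :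
      (0:ℝ) ≤ v ⬝ᵥ v) with h | h
    · exact h
    · exact absurd (dotProduct_self_eq_zero.mp h.symm) hv0
  have hlamS : lam * (v ⬝ᵥ v) = v ⬝ᵥ (H *ᵥ v) := by
    rw [hv, dotProduct_smul, smul_eq_mul]
  have hstep : lam ≤ lamMax M := by
    have h1 : lam * (v ⬝ᵥ v) ≤ lamMax M * (v ⬝ᵥ v) :=
      hlamS ▸ (hHM.trans (rayleigh_le hMherm v))
    exact le_of_mul_le_mul_right h1 hS
  refine hstep.trans (le_csSup ?_ ⟨z, hzpm, rfl⟩)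
  -- bounded above since there are finitely many sign vectors
  have hSfin : {w : Fin n → ℝ | ∀ i, w i = -1 ∨ w i = 1}.Finite := by
    apply Set.Finite.subset (Set.Finite.pi (fun _ : Fin n =>
      (Set.finite_singleton (-1 : ℝ)).insert 1))
    intro w hw
    rw [Set.mem_pi]
    intro i _
    rcases hw i with h | h
    · exact Set.mem_insert_iff.mpr (Or.inr (by simp [h]))
    · exact Set.mem_insert_iff.mpr (Or.inl h)
  refine Set.Finite.bddAbove (Set.Finite.subset
    (hSfin.image fun w => lamMax (vertexU L U w)) ?_)
  rintro m ⟨w, hw, rfl⟩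
  exact ⟨w, hw, rfl⟩
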